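/- Let P be the n×n transition matrix of an irreducible Markov chain with all eigenvalues real and P_ii < 1 for all i, and τ_i(P) = 1/(1 − P_ii). If all non-Perron eigenvalues of P are negative, then 1 ≤ E_H(τ_i(P)) < 1 + 1/(n−1); if all non-Perron eigenvalues of P are zero, then E_H(τ_i(P)) = 1 + 1/(n−1). -/

import Mathlib

open Matrix Polynomial

noncomputable def specRad {ι : Type*} [Fintype ι] [DecidableEq ι]
    (A : Matrix ι ι ℝ) : ℝ :=
  sSup (abs '' spectrum ℝ A)

def IsIrred {n : ℕ} (A : Matrix (Fin n) (Fin n) ℝ) : Prop :=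
  ∀ i j, ∃ t : ℕ, 0 < (A ^ (t + 1)) i j

def Symmetrizable {n : ℕ} (A : Matrix (Fin n) (Fin n) ℝ) : Prop :=
  ∃ (dL dR : Fin n → ℝ) (S : Matrix (Fin n) (Fin n) ℝ),
    (∀ i, 0 < dL i) ∧ (∀ i, 0 < dR i) ∧ S.IsSymm ∧
      A = Matrix.diagonal dL * S * Matrix.diagonal dR

theorem stmt_16 {n : ℕ} (P : Matrix (Fin n) (Fin n) ℝ)
    (hP0 : ∀ i j, 0 ≤ P i j) (hProw : ∀ i, ∑ j, P i j = 1)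
    (hPirr : IsIrred P) (hdiag : ∀ i, P i i < 1)
    (lam : Fin n → ℝ)
    (hlam : P.charpoly = ∏ i, (X - C (lam i)))
    (i₀ : Fin n) (hPerron : lam i₀ = 1) :
    ((∀ i, i ≠ i₀ → lam i < 0) →
      1 ≤ (n : ℝ) / ∑ i, (1 / (1 / (1 - P i i))) ∧
      (n : ℝ) / ∑ i, (1 / (1 / (1 - P i i))) < 1 + 1 / ((n : ℝ) - 1)) ∧
    ((∀ i, i ≠ i₀ → lam i = 0) →
      (n : ℝ) / ∑ i, (1 / (1 / (1 - P i i))) = 1 + 1 / ((n : ℝ) - 1)) := by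
  have hn1 : 0 < n := Fin.pos i₀
  have hn2 : 2 ≤ n := by
    by_contra h
    interval_cases n
    have := hProw i₀
    have h0 : P i₀ i₀ = 1 := by
      fin_cases i₀ <;> simpa using this
    exact absurd h0 (hdiag i₀).ne
  haveI : Nonempty (Fin n) := ⟨i₀⟩
  -- trace = sum of eigenvalues
  have htr : P.trace = ∑ i, lam i := by
    rw [Matrix.trace_eq_neg_charpoly_coeff, hlam]
    have hc : (Fintype.card (Fin n)) = (Finset.univ : Finset (Fin n)).card := by simp
    rw [hc, Polynomial.prod_X_sub_C_coeff_card_pred _ lam (by simpa using hn1), neg_neg]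
  -- rewrite the sum
  have hsum : ∑ i, (1 / (1 / (1 - P i i))) = (n : ℝ) - ∑ i, lam i := by
    simp only [one_div_one_div]
    rw [Finset.sum_sub_distrib, ← htr, Matrix.trace]
    simp [Matrix.diag]
  set s : ℝ := ∑ i ∈ Finset.univ.erase i₀, lam i with hs
  have hsplit : ∑ i, lam i = 1 + s := by
    rw [hs, ← Finset.add_sum_erase _ _ (Finset.mem_univ i₀), hPerron]
  have htrnn : 0 ≤ P.trace := Finset.sum_nonneg fun i _ => hP0 i i
  have hsge : -1 ≤ s := by
    have := htr ▸ htrnn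
    rw [hsplit] at this; linarith
  have htpos : (0:ℝ) < ∑ i, (1 / (1 / (1 - P i i))) := by
    simp only [one_div_one_div]
    exact Finset.sum_pos (fun i _ => by linarith [hdiag i]) Finset.univ_nonempty
  have hne : Finset.Nonempty (Finset.univ.erase i₀) := by
    rw [← Finset.card_pos, Finset.card_erase_of_mem (Finset.mem_univ i₀)]
    simp; omega
  have hn1R : (1:ℝ) < (n:ℝ) := by exact_mod_cast by omega
  constructor
  · intro hneg
    have hslt : s < 0 :=
      Finset.sum_neg (fun i hi => hneg i (Finset.ne_of_mem_erase hi)) hne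
    rw [hsum, hsplit]
    constructor
    · rw [le_div_iff₀ (by rw [hsum, hsplit] at htpos; linarith)]
      linarith
    · rw [div_lt_iff₀ (by rw [hsum, hsplit] at htpos; linarith)]
      have hne1 : (n:ℝ)-1 ≠ 0 := by linarith
      have h1 : (1:ℝ) + 1/((n:ℝ)-1) = (n:ℝ)/((n:ℝ)-1) := by
        field_simp
        ring
      rw [h1, div_mul_eq_mul_div, lt_div_iff₀ (by linarith)]
      nlinarith
  · intro hzero
    have hs0 : s = 0 := Finset.sum_eq_zero fun i hi => hzero i (Finset.ne_of_mem_erase hi)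
    rw [hsum, hsplit, hs0]
    have hne1 : (n:ℝ)-1 ≠ 0 := by linarith
    field_simp
    rw [add_zero, mul_div_assoc, div_self hne1]
    ring
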